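/- Let 𝒜 be an associative algebra and X a tridiagonal (m+1)×(m+1) matrix over 𝒜 with diagonal entries a_m, a_{m-1}, …, a_0 (top-left to bottom-right), superdiagonal entries b_m, …, b_1, and subdiagonal entries c_m, …, c_1. For 1 ≤ k ≤ m+1 let I^{(k)} be the column-determinant of the lower-right k×k principal submatrix X_k. Then I^{(1)} = a_0, I^{(2)} = a_1 a_0 − c_1 b_1, and for 2 ≤ k ≤ m, I^{(k+1)} = a_k I^{(k)} − c_k b_k I^{(k-1)}. -/

import Mathlib

/-- Column-determinant of a matrix over a (possibly noncommutative) ring: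
det(A) = Σ_σ sgn(σ) A_{σ(1),1} A_{σ(2),2} ⋯ A_{σ(n),n}. -/
noncomputable def cdet {𝒜 : Type*} [Ring 𝒜] {n : ℕ} (A : Matrix (Fin n) (Fin n) 𝒜) : 𝒜 :=
  ∑ σ : Equiv.Perm (Fin n),
    (Equiv.Perm.sign σ : ℤ) • (List.ofFn (fun j => A (σ j) j)).prod

/-- The tridiagonal (m+1)×(m+1) matrix with diagonal entries a_m,…,a_0 (top-left to
bottom-right), superdiagonal entries b_m,…,b_1, and subdiagonal entries c_m,…,c_1. -/
def trid {𝒜 : Type*} [Ring 𝒜] (m : ℕ) (a b c : ℕ → 𝒜) :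
    Matrix (Fin (m+1)) (Fin (m+1)) 𝒜 :=
  fun i j =>
    if (i : ℕ) = (j : ℕ) then a (m - (i : ℕ))
    else if (i : ℕ) + 1 = (j : ℕ) then b (m - (i : ℕ))
    else if (j : ℕ) + 1 = (i : ℕ) then c (m - (j : ℕ))
    else 0

lemma cdet_succ {𝒜 : Type*} [Ring 𝒜] {n : ℕ} (A : Matrix (Fin (n+1)) (Fin (n+1)) 𝒜) :
    cdet A = ∑ p : Fin (n+1), ((if p = 0 then 1 else -1 : ℤ)) •
      (A p 0 * cdet (A.submatrix (fun i : Fin n => Equiv.swap 0 p i.succ) Fin.succ)) := by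
  rw [cdet, ← Equiv.sum_comp Equiv.Perm.decomposeFin.symm, Fintype.sum_prod_type]
  refine Finset.sum_congr rfl fun p _ => ?_
  rw [cdet, Finset.mul_sum, Finset.smul_sum]
  refine Finset.sum_congr rfl fun τ _ => ?_
  rw [Equiv.Perm.decomposeFin.symm_sign, List.ofFn_succ]
  simp only [List.prod_cons, Equiv.Perm.decomposeFin_symm_apply_zero,
    Equiv.Perm.decomposeFin_symm_apply_succ, Matrix.submatrix_apply, Units.val_mul,
    Units.val_one, Units.val_neg, apply_ite (fun u : ℤˣ => (u : ℤ))]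
  rw [mul_smul, mul_smul_comm]

lemma cdet_zero_row {𝒜 : Type*} [Ring 𝒜] {n : ℕ} (A : Matrix (Fin n) (Fin n) 𝒜) (i : Fin n)
    (h : ∀ j, A i j = 0) : cdet A = 0 := by
  rw [cdet]
  refine Finset.sum_eq_zero fun σ _ => ?_
  rw [List.prod_eq_zero, smul_zero]
  rw [List.mem_ofFn]
  exact ⟨σ⁻¹ i, by simp [h]⟩

lemma cdet_fin_one {𝒜 : Type*} [Ring 𝒜] (A : Matrix (Fin 1) (Fin 1) 𝒜) :
    cdet A = A 0 0 := by
  rw [cdet]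
  rw [Finset.sum_eq_single 1 (fun σ _ _ => absurd (Subsingleton.elim σ 1) ‹_›) (by simp)]
  simp [List.ofFn_succ]

noncomputable def Dt {𝒜 : Type*} [Ring 𝒜] (a b c : ℕ → 𝒜) (k : ℕ) : 𝒜 :=
  cdet (trid k a b c)

lemma trid_minor_diag {𝒜 : Type*} [Ring 𝒜] (k : ℕ) (a b c : ℕ → 𝒜) :
    (trid (k+1) a b c).submatrix Fin.succ Fin.succ = trid k a b c := by
  ext i j
  simp only [Matrix.submatrix_apply, trid, Fin.val_succ, Nat.add_right_cancel_iff,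
    Nat.add_sub_add_right]

lemma Dt_zero {𝒜 : Type*} [Ring 𝒜] (a b c : ℕ → 𝒜) : Dt a b c 0 = a 0 := by
  rw [Dt, cdet_fin_one]; simp [trid]

lemma Dt_one {𝒜 : Type*} [Ring 𝒜] (a b c : ℕ → 𝒜) :
    Dt a b c 1 = a 1 * a 0 - c 1 * b 1 := by
  rw [Dt, cdet_succ, Fin.sum_univ_two]
  simp [cdet_fin_one, trid, Equiv.swap_apply_def, Fin.ext_iff, sub_eq_add_neg]

lemma Dt_rec {𝒜 : Type*} [Ring 𝒜] (a b c : ℕ → 𝒜) (k : ℕ) :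
    Dt a b c (k+2) = a (k+2) * Dt a b c (k+1) - c (k+2) * b (k+2) * Dt a b c k := by
  set A := trid (k+2) a b c with hA
  have swfix : ∀ i : Fin (k+1), Equiv.swap (0 : Fin (k+3)) 1 i.succ.succ = i.succ.succ := by
    intro i
    refine Equiv.swap_apply_of_ne_of_ne (Fin.succ_ne_zero _) ?_
    simp [Fin.ext_iff, -Fin.val_eq_zero_iff]
  -- the (1,0)-minor N
  set N := A.submatrix (fun i : Fin (k+2) => Equiv.swap (0 : Fin (k+3)) 1 i.succ) Fin.succ with hN
  have hNval : cdet N = b (k+2) * Dt a b c k := by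
    rw [cdet_succ, Fin.sum_univ_succ, Fin.sum_univ_succ]
    have h1 : N 0 0 = b (k+2) := by
      simp [hN, hA, trid, Equiv.swap_apply_def, Fin.ext_iff, -Fin.val_eq_zero_iff]
    have h2 : N.submatrix (fun i : Fin (k+1) => Equiv.swap (0 : Fin (k+2)) 0 i.succ) Fin.succ
        = trid k a b c := by
      ext i j
      simp only [Equiv.swap_self, Equiv.refl_apply, hN, Matrix.submatrix_apply, swfix]
      rw [hA, show (i.succ.succ : Fin (k+3)) = (Fin.succ (Fin.succ i) : Fin (k+3)) from rfl]
      have := congrFun (congrFun (trid_minor_diag (k+1) a b c) i.succ) j.succ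
      rw [Matrix.submatrix_apply] at this
      rw [this]
      have := congrFun (congrFun (trid_minor_diag k a b c) i) j
      rw [Matrix.submatrix_apply] at this
      rw [this]
    -- p' = 1 term: zero row
    have h3 : cdet (N.submatrix
        (fun i : Fin (k+1) => Equiv.swap (0 : Fin (k+2)) 1 i.succ) Fin.succ) = 0 := by
      refine cdet_zero_row _ 0 fun j => ?_
      simp [hN, hA, trid, Equiv.swap_apply_def, Fin.ext_iff, -Fin.val_eq_zero_iff]
    have h4 : ∀ p : Fin k, N p.succ.succ 0 = 0 := by
      intro p
      simp only [hN, Matrix.submatrix_apply]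
      rw [swfix]
      simp [hA, trid, Fin.ext_iff]
    rw [Finset.sum_eq_zero (fun p _ => by rw [h4, zero_mul, smul_zero])]
    simp only [Fin.succ_zero_eq_one, h1, h2, h3, mul_zero, smul_zero, add_zero, reduceIte,
      one_smul]
    rw [Dt]
  -- main expansion
  have h0 : ∀ p : Fin (k+1), A p.succ.succ 0 = 0 := by
    intro p; simp [hA, trid, Fin.ext_iff, -Fin.val_eq_zero_iff]
  have hA00 : A 0 0 = a (k+2) := by simp [hA, trid]
  have hA10 : A 1 0 = c (k+2) := by simp [hA, trid, Fin.ext_iff]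
  have hM0 : A.submatrix (fun i : Fin (k+2) => Equiv.swap (0 : Fin (k+3)) 0 i.succ) Fin.succ
      = trid (k+1) a b c := by
    simp only [Equiv.swap_self, Equiv.refl_apply]
    exact trid_minor_diag (k+1) a b c
  rw [show Dt a b c (k+2) = cdet A from rfl, cdet_succ, Fin.sum_univ_succ, Fin.sum_univ_succ]
  rw [Finset.sum_eq_zero (fun p _ => by rw [h0, zero_mul, smul_zero])]
  simp only [Fin.succ_zero_eq_one, hA00, hA10, hM0, add_zero, reduceIte, one_smul]
  rw [hNval]
  simp only [show ¬ ((1 : Fin (k+2+1)) = 0) from by simp [Fin.ext_iff, -Fin.val_eq_zero_iff], if_false]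
  rw [neg_smul, one_smul, ← mul_assoc,
    ← sub_eq_add_neg]
  rfl

/-- The column-determinant `I^{(k)}` of the lower-right k×k principal submatrix of the
tridiagonal matrix `trid m a b c`. -/
noncomputable def lowerRightMinor {𝒜 : Type*} [Ring 𝒜] (m : ℕ) (a b c : ℕ → 𝒜)
    (k : ℕ) (hk : k ≤ m + 1) : 𝒜 :=
  cdet ((trid m a b c).submatrix
    (fun i : Fin k => (⟨m + 1 - k + (i : ℕ), by omega⟩ : Fin (m+1)))
    (fun i : Fin k => (⟨m + 1 - k + (i : ℕ), by omega⟩ : Fin (m+1))))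

lemma lowerRightMinor_eq_Dt {𝒜 : Type*} [Ring 𝒜] (m : ℕ) (a b c : ℕ → 𝒜)
    (k' : ℕ) (hk : k' + 1 ≤ m + 1) :
    lowerRightMinor m a b c (k'+1) hk = Dt a b c k' := by
  rw [lowerRightMinor, Dt]
  congr 1
  ext i j
  have hi : (i:ℕ) ≤ k' := Nat.lt_succ_iff.mp i.isLt
  have hj : (j:ℕ) ≤ k' := Nat.lt_succ_iff.mp j.isLt
  simp only [Matrix.submatrix_apply, trid]
  have e1 : m - (m + 1 - (k'+1) + (i:ℕ)) = k' - i := by omega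
  have e2 : m - (m + 1 - (k'+1) + (j:ℕ)) = k' - j := by omega
  by_cases hij : (i:ℕ) = (j:ℕ)
  · rw [if_pos (by simp; omega), if_pos hij, e1]
  · rw [if_neg (by simp; omega), if_neg hij]
    by_cases hsij : (i:ℕ)+1 = j
    · rw [if_pos (by simp; omega), if_pos hsij, e1]
    · rw [if_neg (by simp; omega), if_neg hsij]
      by_cases hsji : (j:ℕ)+1 = i
      · rw [if_pos (by simp; omega), if_pos hsji, e2]
      · rw [if_neg (by simp; omega), if_neg hsji]

/-- Recursion for the principal minors of a noncommutative tridiagonal matrix: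
I^{(1)} = a_0, I^{(2)} = a_1 a_0 − c_1 b_1, and
I^{(k+1)} = a_k I^{(k)} − c_k b_k I^{(k-1)} for 2 ≤ k ≤ m. -/
theorem stmt4 {𝒜 : Type*} [Ring 𝒜] (m : ℕ) (a b c : ℕ → 𝒜) (hm : 1 ≤ m) :
    lowerRightMinor m a b c 1 (by omega) = a 0 ∧
    lowerRightMinor m a b c 2 (by omega) = a 1 * a 0 - c 1 * b 1 ∧
    ∀ (k : ℕ) (h2 : 2 ≤ k) (hk : k ≤ m),
      lowerRightMinor m a b c (k+1) (by omega) =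
        a k * lowerRightMinor m a b c k (by omega) -
          c k * b k * lowerRightMinor m a b c (k-1) (by omega) := by
  refine ⟨?_, ?_, ?_⟩
  · exact (lowerRightMinor_eq_Dt m a b c 0 (by omega)).trans (Dt_zero a b c)
  · exact (lowerRightMinor_eq_Dt m a b c 1 (by omega)).trans (Dt_one a b c)
  · intro k h2 hk
    obtain ⟨k', rfl⟩ : ∃ k', k = k' + 2 := ⟨k - 2, by omega⟩
    rw [lowerRightMinor_eq_Dt m a b c (k'+2) (by omega),
      lowerRightMinor_eq_Dt m a b c (k'+1) (by omega),
      show lowerRightMinor m a b c (k'+2-1) (by omega) = Dt a b c k' from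
        lowerRightMinor_eq_Dt m a b c k' (by omega)]
    exact Dt_rec a b c k'
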